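/- If (Bₖ) satisfies the recursion Bₖ = (−1/(Ω₁² − ((k+1)ω)²))·(B²_{ν−1}·δ_{k,2ν−1} + 2∑_{i+j=k−1, i>j} BᵢBⱼ) and the series x̂(t) = ∑_{k≥1} ε^{k−1}B_{k−1}exp(ikωt) converges absolutely together with its termwise first and second derivatives, then x̂ satisfies x̂'' + Ω₁²x̂ + ε·x̂² = F·exp(iωt), where B₀ = F/(Ω₁² − ω²). -/

import Mathlib

open Complex

lemma aux_antidiag_split (n : ℕ) (f : ℕ → ℂ) :
    ∑ p ∈ Finset.HasAntidiagonal.antidiagonal n, f p.1 * f p.2 =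
      (if Even n then (f (n / 2)) ^ 2 else 0) +
        2 * ∑ p ∈ (Finset.HasAntidiagonal.antidiagonal n).filter (fun p => p.2 < p.1), f p.1 * f p.2 := by
  classical
  have hE : (Finset.HasAntidiagonal.antidiagonal n).filter (fun p : ℕ × ℕ => ¬ p.2 < p.1 ∧ p.1 < p.2)
      = (Finset.HasAntidiagonal.antidiagonal n).filter (fun p => p.1 < p.2) := by
    apply Finset.filter_congr; intro p _
    omega
  have hQ : (Finset.HasAntidiagonal.antidiagonal n).filter (fun p : ℕ × ℕ => ¬ p.2 < p.1 ∧ ¬ p.1 < p.2)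
      = (Finset.HasAntidiagonal.antidiagonal n).filter (fun p => p.1 = p.2) := by
    apply Finset.filter_congr; intro p _
    omega
  have h1 : ∑ p ∈ Finset.HasAntidiagonal.antidiagonal n, f p.1 * f p.2 =
      (∑ p ∈ (Finset.HasAntidiagonal.antidiagonal n).filter (fun p => p.2 < p.1), f p.1 * f p.2) +
      ((∑ p ∈ (Finset.HasAntidiagonal.antidiagonal n).filter (fun p => p.1 < p.2), f p.1 * f p.2) +
      (∑ p ∈ (Finset.HasAntidiagonal.antidiagonal n).filter (fun p => p.1 = p.2), f p.1 * f p.2)) := by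
    rw [← Finset.sum_filter_add_sum_filter_not (Finset.HasAntidiagonal.antidiagonal n) (fun p => p.2 < p.1)]
    rw [← Finset.sum_filter_add_sum_filter_not ((Finset.HasAntidiagonal.antidiagonal n).filter (fun p => ¬ p.2 < p.1)) (fun p => p.1 < p.2)]
    rw [Finset.filter_filter, Finset.filter_filter, hE, hQ]
  have h2 : (∑ p ∈ (Finset.HasAntidiagonal.antidiagonal n).filter (fun p => p.1 < p.2), f p.1 * f p.2) =
      ∑ p ∈ (Finset.HasAntidiagonal.antidiagonal n).filter (fun p => p.2 < p.1), f p.1 * f p.2 := by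
    apply Finset.sum_nbij' (i := Prod.swap) (j := Prod.swap)
    · rintro ⟨a, b⟩ hp; simp only [Finset.mem_filter, Finset.HasAntidiagonal.mem_antidiagonal, Prod.swap_prod_mk] at hp ⊢
      exact ⟨by omega, hp.2⟩
    · rintro ⟨a, b⟩ hp; simp only [Finset.mem_filter, Finset.HasAntidiagonal.mem_antidiagonal, Prod.swap_prod_mk] at hp ⊢
      exact ⟨by omega, hp.2⟩
    · intro p _; simp
    · intro p _; simp
    · intro p _; simp [mul_comm]
  have h3 : (∑ p ∈ (Finset.HasAntidiagonal.antidiagonal n).filter (fun p => p.1 = p.2), f p.1 * f p.2) =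
      if Even n then (f (n / 2)) ^ 2 else 0 := by
    rcases Nat.even_or_odd n with he | ho
    · obtain ⟨m, hm⟩ := he
      have hset : (Finset.HasAntidiagonal.antidiagonal n).filter (fun p : ℕ × ℕ => p.1 = p.2) = {(m, m)} := by
        ext ⟨a, b⟩
        simp only [Finset.mem_filter, Finset.HasAntidiagonal.mem_antidiagonal, Finset.mem_singleton, Prod.mk.injEq]
        omega
      have hm2 : n / 2 = m := by omega
      rw [hset, if_pos ⟨m, hm⟩, hm2]
      simp [sq]
    · obtain ⟨m, hm⟩ := ho
      have hset : (Finset.HasAntidiagonal.antidiagonal n).filter (fun p : ℕ × ℕ => p.1 = p.2) = ∅ := by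
        ext ⟨a, b⟩
        simp only [Finset.mem_filter, Finset.HasAntidiagonal.mem_antidiagonal, Finset.notMem_empty, iff_false,
          not_and]
        intro h1 h2; omega
      rw [hset, if_neg (Nat.not_even_iff_odd.mpr ⟨m, hm⟩)]
      simp
  rw [h1, h2, h3]; ring

theorem stmt_11 (μ ω₁ ω ε F : ℝ) (hμ : μ ≠ 0) (hω₁ : ω₁ ≠ 0)
    (Ω₁sq : ℂ) (hΩ : Ω₁sq = (ω₁ : ℂ) ^ 2 * (1 + Complex.I * μ))
    (B : ℕ → ℂ)
    (hB₀ : B 0 = (F : ℂ) / (Ω₁sq - (ω : ℂ) ^ 2))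
    (hrec : ∀ k : ℕ, 1 ≤ k →
      B k = (-1 / (Ω₁sq - (((k : ℂ) + 1) * ω) ^ 2)) *
        ((if Odd k then (B ((k - 1) / 2)) ^ 2 else 0) +
          2 * ∑ p ∈ (Finset.HasAntidiagonal.antidiagonal (k - 1)).filter (fun p => p.2 < p.1),
            B p.1 * B p.2))
    (xhat : ℝ → ℂ)
    (hxhat : ∀ t : ℝ, xhat t =
      ∑' k : ℕ, (ε : ℂ) ^ k * B k * Complex.exp (((k : ℂ) + 1) * Complex.I * ω * t))
    (hs0 : Summable (fun k : ℕ => ‖(ε : ℂ) ^ k * B k‖))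
    (hs1 : Summable (fun k : ℕ => (((k : ℝ) + 1) * ω) * ‖(ε : ℂ) ^ k * B k‖))
    (hs2 : Summable (fun k : ℕ => (((k : ℝ) + 1) * ω) ^ 2 * ‖(ε : ℂ) ^ k * B k‖)) :
    ∀ t : ℝ, deriv (deriv xhat) t + Ω₁sq * xhat t + (ε : ℂ) * (xhat t) ^ 2 =
      (F : ℂ) * Complex.exp (Complex.I * ω * t) := by
  classical
  have hne : ∀ r : ℝ, Ω₁sq - ((r : ℂ)) ^ 2 ≠ 0 := by
    have him : Ω₁sq.im = ω₁ ^ 2 * μ := by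
      rw [hΩ]; simp [← Complex.ofReal_pow, Complex.mul_im]
    intro r h
    have h2 : ω₁ ^ 2 * μ = 0 := by
      have := congrArg Complex.im h
      simpa [him, ← Complex.ofReal_pow] using this
    rcases mul_eq_zero.mp h2 with h3 | h3
    · exact hω₁ (by simpa using pow_eq_zero_iff (n := 2) (by norm_num) |>.mp h3)
    · exact hμ h3
  intro t
  set g : ℕ → ℝ → ℂ :=
    fun k s => (ε : ℂ) ^ k * B k * Complex.exp (((k : ℂ) + 1) * Complex.I * ω * s) with hgdef
  set g1 : ℕ → ℝ → ℂ := fun k s => ((k : ℂ) + 1) * Complex.I * ω * g k s with hg1def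
  set g2 : ℕ → ℝ → ℂ := fun k s => (((k : ℂ) + 1) * Complex.I * ω) ^ 2 * g k s with hg2def
  have hnorm : ∀ (k : ℕ) (s : ℝ), ‖Complex.exp (((k : ℂ) + 1) * Complex.I * ω * s)‖ = 1 := by
    intro k s; rw [Complex.norm_exp]
    norm_num [Complex.mul_re, Complex.mul_im]
  have hgnorm : ∀ (k : ℕ) (s : ℝ), ‖g k s‖ = ‖(ε : ℂ) ^ k * B k‖ := by
    intro k s
    rw [hgdef]; simp only []
    rw [norm_mul, hnorm, mul_one]
  have hCnorm : ∀ k : ℕ, ‖((k : ℂ) + 1) * Complex.I * ω‖ = ((k : ℝ) + 1) * |ω| := by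
    intro k
    have h1 : ((k : ℂ) + 1) = ((((k : ℝ) + 1) : ℝ) : ℂ) := by push_cast; ring
    rw [h1, norm_mul, norm_mul, Complex.norm_real, Complex.norm_I, Complex.norm_real,
      Real.norm_eq_abs, Real.norm_eq_abs,
      _root_.abs_of_nonneg (by positivity : (0:ℝ) ≤ (k : ℝ) + 1)]
    ring
  have hg1norm : ∀ (k : ℕ) (s : ℝ), ‖g1 k s‖ = ((k : ℝ) + 1) * |ω| * ‖(ε : ℂ) ^ k * B k‖ := by
    intro k s
    rw [hg1def]; simp only []
    rw [norm_mul, hCnorm, hgnorm]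
  have hg2norm : ∀ (k : ℕ) (s : ℝ), ‖g2 k s‖ = (((k : ℝ) + 1) * ω) ^ 2 * ‖(ε : ℂ) ^ k * B k‖ := by
    intro k s
    rw [hg2def]; simp only []
    rw [norm_mul, norm_pow, hCnorm, hgnorm, mul_pow, mul_pow, _root_.sq_abs]
  have hu1 : Summable (fun k : ℕ => ((k : ℝ) + 1) * |ω| * ‖(ε : ℂ) ^ k * B k‖) := by
    have h := summable_abs_iff.mpr hs1
    refine h.congr fun k => ?_
    rw [abs_mul, abs_mul, _root_.abs_of_nonneg (norm_nonneg _),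
      _root_.abs_of_nonneg (by positivity : (0:ℝ) ≤ (k : ℝ) + 1)]
  have hHD : ∀ (k : ℕ) (s : ℝ), HasDerivAt (g k) (g1 k s) s := by
    intro k s
    have h1 : HasDerivAt (fun z : ℂ => (ε : ℂ) ^ k * B k * Complex.exp (((k : ℂ) + 1) * Complex.I * ω * z))
        ((ε : ℂ) ^ k * B k *
          (Complex.exp (((k : ℂ) + 1) * Complex.I * ω * (s : ℂ)) * (((k : ℂ) + 1) * Complex.I * ω * 1)))
        (s : ℂ) :=
      (((hasDerivAt_id ((s : ℂ))).const_mul (((k : ℂ) + 1) * Complex.I * ω)).cexp).const_mul _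
    have h2 := h1.comp_ofReal
    simp only [hg1def, hgdef]
    convert h2 using 1
    ring
  have hg0 : Summable (fun k => g k 0) :=
    Summable.of_norm (hs0.congr fun k => (hgnorm k 0).symm)
  have hD1 : ∀ s : ℝ, HasDerivAt xhat (∑' k, g1 k s) s := by
    intro s
    have hx : xhat = fun u : ℝ => ∑' k, g k u := by
      funext u; rw [hxhat u, hgdef]
    rw [hx]
    exact hasDerivAt_tsum hu1 hHD (fun k s => (hg1norm k s).le) hg0 s
  have hd1 : deriv xhat = fun s : ℝ => ∑' k, g1 k s := funext fun s => (hD1 s).deriv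
  have hHD2 : ∀ (k : ℕ) (s : ℝ), HasDerivAt (g1 k) (g2 k s) s := by
    intro k s
    have h := (hHD k s).const_mul (((k : ℂ) + 1) * Complex.I * ω)
    have hfun : g1 k = fun u => ((k : ℂ) + 1) * Complex.I * ω * g k u := by
      funext u; rw [hg1def]
    rw [hfun]
    refine h.congr_deriv ?_
    rw [hg2def, hg1def]; simp only []
    ring
  have hg10 : Summable (fun k => g1 k 0) :=
    Summable.of_norm (hu1.congr fun k => (hg1norm k 0).symm)
  have hD2 : HasDerivAt (fun s : ℝ => ∑' k, g1 k s) (∑' k, g2 k t) t :=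
    hasDerivAt_tsum hs2 hHD2 (fun k s => (hg2norm k s).le) hg10 t
  have hdd : deriv (deriv xhat) t = ∑' k, g2 k t := by
    rw [hd1]; exact hD2.deriv
  have Sg : Summable (fun k => g k t) :=
    Summable.of_norm (hs0.congr fun k => (hgnorm k t).symm)
  have S2 : Summable (fun k => g2 k t) :=
    Summable.of_norm (hs2.congr fun k => (hg2norm k t).symm)
  have hgn : Summable (fun k => ‖g k t‖) := hs0.congr fun k => (hgnorm k t).symm
  have hxg : xhat t = ∑' k, g k t := by rw [hxhat t, hgdef]
  have hsq : xhat t ^ 2 = ∑' n, ∑ p ∈ Finset.HasAntidiagonal.antidiagonal n, g p.1 t * g p.2 t := by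
    rw [hxg, sq, tsum_mul_tsum_eq_tsum_sum_antidiagonal_of_summable_norm hgn hgn]
  have hsum_g : ∀ n : ℕ, ∑ p ∈ Finset.HasAntidiagonal.antidiagonal n, g p.1 t * g p.2 t
      = (ε : ℂ) ^ n * (∑ p ∈ Finset.HasAntidiagonal.antidiagonal n, B p.1 * B p.2) *
        Complex.exp (((n : ℂ) + 2) * Complex.I * ω * t) := by
    intro n
    rw [Finset.mul_sum, Finset.sum_mul]
    refine Finset.sum_congr rfl fun p hp => ?_
    rw [Finset.HasAntidiagonal.mem_antidiagonal] at hp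
    obtain ⟨i, j⟩ := p
    simp only at hp
    subst hp
    rw [hgdef]; simp only []
    rw [mul_mul_mul_comm, ← Complex.exp_add]
    have harg : ((i : ℂ) + 1) * Complex.I * ω * t + ((j : ℂ) + 1) * Complex.I * ω * t
        = (((i + j : ℕ) : ℂ) + 2) * Complex.I * ω * t := by push_cast; ring
    rw [harg]
    push_cast
    ring
  have hkey : ∀ n : ℕ,
      (ε : ℂ) * ((ε : ℂ) ^ n * (∑ p ∈ Finset.HasAntidiagonal.antidiagonal n, B p.1 * B p.2) *
        Complex.exp (((n : ℂ) + 2) * Complex.I * ω * t))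
      = -(g2 (n + 1) t + Ω₁sq * g (n + 1) t) := by
    intro n
    have hrecn := hrec (n + 1) (by omega)
    simp only [Nat.add_sub_cancel] at hrecn
    have hfull : (if Odd (n + 1) then (B (n / 2)) ^ 2 else 0) +
        2 * ∑ p ∈ (Finset.HasAntidiagonal.antidiagonal n).filter (fun p => p.2 < p.1), B p.1 * B p.2
        = ∑ p ∈ Finset.HasAntidiagonal.antidiagonal n, B p.1 * B p.2 := by
      rw [aux_antidiag_split n B]
      congr 1
      simp [Nat.odd_add_one, Nat.not_odd_iff_even]
    have hdne : Ω₁sq - ((((n + 1 : ℕ) : ℂ) + 1) * (ω : ℂ)) ^ 2 ≠ 0 := by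
      have hcast : (((n + 1 : ℕ) : ℂ) + 1) * (ω : ℂ) = ((((n : ℝ) + 2) * ω : ℝ) : ℂ) := by
        push_cast; ring
      rw [hcast]; exact hne _
    have hBd : B (n + 1) * (Ω₁sq - ((((n + 1 : ℕ) : ℂ) + 1) * (ω : ℂ)) ^ 2)
        = -(∑ p ∈ Finset.HasAntidiagonal.antidiagonal n, B p.1 * B p.2) := by
      rw [hrecn, hfull]
      push_cast at hdne ⊢
      field_simp
      exact congrArg Neg.neg (mul_div_cancel_left₀ _ (by rwa [mul_pow] at hdne))
    have hexp : Complex.exp ((((n + 1 : ℕ) : ℂ) + 1) * Complex.I * ω * t)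
        = Complex.exp (((n : ℂ) + 2) * Complex.I * ω * t) := by
      congr 1; push_cast; ring
    have hIsq : ((((n + 1 : ℕ) : ℂ) + 1) * Complex.I * ω) ^ 2
        = -(((((n + 1 : ℕ) : ℂ) + 1) * (ω : ℂ)) ^ 2) := by
      rw [mul_pow, mul_pow, Complex.I_sq]; ring
    rw [hg2def, hgdef]; simp only []
    rw [hIsq, hexp]
    linear_combination ((ε : ℂ) ^ (n + 1) * Complex.exp (((n : ℂ) + 2) * Complex.I * (ω : ℂ) * (t : ℂ))) * hBd
  -- assembly
  have SC : Summable (fun n => ∑ p ∈ Finset.HasAntidiagonal.antidiagonal n, g p.1 t * g p.2 t) :=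
    (summable_norm_sum_mul_antidiagonal_of_summable_norm hgn hgn).of_norm
  have hT1 : Summable (fun k => g2 k t + Ω₁sq * g k t) := S2.add (Sg.mul_left _)
  rw [hdd, hsq, hxg, ← tsum_mul_left, ← tsum_mul_left, ← Summable.tsum_add S2 (Sg.mul_left Ω₁sq)]
  have h2 : (∑' n, (ε : ℂ) * ∑ p ∈ Finset.HasAntidiagonal.antidiagonal n, g p.1 t * g p.2 t)
      = -∑' n, (g2 (n + 1) t + Ω₁sq * g (n + 1) t) := by
    rw [← tsum_neg]
    exact tsum_congr fun n => by rw [hsum_g n, hkey n]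
  rw [h2, Summable.tsum_eq_zero_add hT1]
  simp only [add_neg_cancel_right]
  rw [hg2def, hgdef]; simp only []
  rw [hB₀]
  simp only [Nat.cast_zero, zero_add, one_mul, pow_zero]
  have hIω : ((Complex.I * (ω : ℂ)) ^ 2) = -(ω : ℂ) ^ 2 := by
    rw [mul_pow, Complex.I_sq]; ring
  rw [hIω]
  have hd0 : Ω₁sq - (ω : ℂ) ^ 2 ≠ 0 := hne ω
  field_simp
  ring
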